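/- Fix p > 0, d > 0, γ > 0, h > 0, ν ∈ (0,1), θ ∈ (0,1], s > 0, q ≥ 0, and suppose γ > dh and the viability condition p(γ − dh)(νq + s(θ + ν − θν)) > d(q + s) + dp(1 − ν) holds, so that x̂ = d(q + s)/(p[γ(νq + s(θ + ν − θν)) − d(1 − ν + hνq + hs(θ + ν − θν))]) > 0. Define ES = (q + s + p·x̂·(1 − ν))/(p·x̂·(νq + s(θ + ν − θν))) and EP = (q + s + p·x̂ − θs)/(p·x̂·(νq + s(θ + ν − θν))), and set s* = d/((γ − dh)θ). Then: ES = EP if s = s*; ES > EP if s > s*; and ES < EP if s < s*. -/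

import Mathlib

/-- Proposition 1 of the paper: comparison of the expected time till prey capture
for a predator starting in the searching state (`ES`) versus starting in the
stand-off state (`EP`), at the resident equilibrium prey density `xhat`. -/
theorem stmt0 (p d γ h ν θ s q : ℝ)
    (hp : 0 < p) (hd : 0 < d) (hγ : 0 < γ) (hh : 0 < h)
    (hν : ν ∈ Set.Ioo (0 : ℝ) 1) (hθ : θ ∈ Set.Ioc (0 : ℝ) 1)
    (hs : 0 < s) (hq : 0 ≤ q)
    (hγdh : γ > d * h)
    (hviab : p * (γ - d * h) * (ν * q + s * (θ + ν - θ * ν)) >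
      d * (q + s) + d * p * (1 - ν))
    (xhat ES EP sstar : ℝ)
    (hx : xhat = d * (q + s) /
      (p * (γ * (ν * q + s * (θ + ν - θ * ν)) -
        d * (1 - ν + h * ν * q + h * s * (θ + ν - θ * ν)))))
    (hES : ES = (q + s + p * xhat * (1 - ν)) /
      (p * xhat * (ν * q + s * (θ + ν - θ * ν))))
    (hEP : EP = (q + s + p * xhat - θ * s) /
      (p * xhat * (ν * q + s * (θ + ν - θ * ν))))
    (hst : sstar = d / ((γ - d * h) * θ)) :
    0 < xhat ∧
    (s = sstar → ES = EP) ∧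
    (s > sstar → ES > EP) ∧
    (s < sstar → ES < EP) := by
  obtain ⟨hν0, hν1⟩ := hν
  obtain ⟨hθ0, hθ1⟩ := hθ
  have hA : 0 < ν * q + s * (θ + ν - θ * ν) := by
    nlinarith [mul_nonneg hν0.le hq, mul_pos hs hν0,
      mul_pos (mul_pos hs hθ0) (sub_pos.mpr hν1)]
  have hB : 0 < γ * (ν * q + s * (θ + ν - θ * ν)) -
      d * (1 - ν + h * ν * q + h * s * (θ + ν - θ * ν)) := by
    by_contra hcon
    push_neg at hcon
    nlinarith [mul_pos hd (show (0:ℝ) < q + s by linarith),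
      mul_nonpos_of_nonneg_of_nonpos hp.le hcon]
  have hpB : 0 < p * (γ * (ν * q + s * (θ + ν - θ * ν)) -
      d * (1 - ν + h * ν * q + h * s * (θ + ν - θ * ν))) := mul_pos hp hB
  have hxpos : 0 < xhat := by
    rw [hx]
    exact div_pos (mul_pos hd (by linarith)) hpB
  have hxeq : xhat * (p * (γ * (ν * q + s * (θ + ν - θ * ν)) -
      d * (1 - ν + h * ν * q + h * s * (θ + ν - θ * ν)))) = d * (q + s) := by
    rw [hx]
    field_simp
    exact div_self (ne_of_gt (by linarith))
  have key : (θ * s - p * xhat * ν) * (γ * (ν * q + s * (θ + ν - θ * ν)) -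
      d * (1 - ν + h * ν * q + h * s * (θ + ν - θ * ν)))
      = (ν * q + s * (θ + ν - θ * ν)) * ((γ - d * h) * θ * s - d) := by
    linear_combination (-ν) * hxeq
  have hden : 0 < p * xhat * (ν * q + s * (θ + ν - θ * ν)) :=
    mul_pos (mul_pos hp hxpos) hA
  have hγθ : 0 < (γ - d * h) * θ := mul_pos (by linarith) hθ0
  refine ⟨hxpos, ?_, ?_, ?_⟩
  · intro hss
    have h1 : (γ - d * h) * θ * s = d := by
      rw [hss, hst]
      field_simp
      exact div_self (ne_of_gt (by linarith))
    have h2 : θ * s - p * xhat * ν = 0 := by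
      have := key
      rw [h1] at this
      simp at this
      rcases this with h | h
      · exact h
      · linarith
    rw [hES, hEP]
    congr 1
    linear_combination h2
  · intro hss
    have h1 : (γ - d * h) * θ * s > d := by
      rw [hst] at hss
      rw [gt_iff_lt, div_lt_iff₀ hγθ] at hss
      linarith
    have h2 : 0 < θ * s - p * xhat * ν := by
      by_contra hcon
      push_neg at hcon
      linarith [key, mul_pos hA (show (0:ℝ) < (γ - d * h) * θ * s - d by linarith),
        mul_nonpos_of_nonpos_of_nonneg hcon hB.le]
    have hnum : q + s + p * xhat - θ * s < q + s + p * xhat * (1 - ν) := by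
      have expand : q + s + p * xhat * (1 - ν) = q + s + p * xhat - p * xhat * ν := by
        ring
      rw [expand]
      linarith [h2]
    rw [hES, hEP]
    exact div_lt_div_of_pos_right hnum hden
  · intro hss
    have h1 : (γ - d * h) * θ * s < d := by
      rw [hst] at hss
      rw [lt_div_iff₀ hγθ] at hss
      linarith
    have h2 : θ * s - p * xhat * ν < 0 := by
      by_contra hcon
      push_neg at hcon
      linarith [key, mul_neg_of_pos_of_neg hA (show (γ - d * h) * θ * s - d < 0 by linarith),
        mul_nonneg hcon hB.le]
    have hnum : q + s + p * xhat * (1 - ν) < q + s + p * xhat - θ * s := by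
      have expand : q + s + p * xhat * (1 - ν) = q + s + p * xhat - p * xhat * ν := by
        ring
      rw [expand]
      linarith [h2]
    rw [hES, hEP]
    exact div_lt_div_of_pos_right hnum hden
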